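/- Let E be a real topological vector space and let E' be its continuous dual space equipped with the weak-* topology. Then cylindrical functions separate points from closed sets in E': for every closed subset C ⊆ E' and every T ∈ E' ∖ C, there exist m ∈ ℕ, elements f₁, …, f_m ∈ E, and a bounded continuous function F̃ : ℝ^m → ℝ with 0 ≤ F̃ ≤ 1 such that F̃(T(f₁), …, T(f_m)) = 1 while F̃(S(f₁), …, S(f_m)) = 0 for every S ∈ C. -/

import Mathlib

open Filter Topology


/-- On the continuous dual of a real topological vector space `E`, equipped
with the weak-* topology (`WeakDual ℝ E`), cylindrical functions separate points from closed
sets: for each weak-* closed set `C` and each `T ∉ C` there are finitely many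
`f₁, …, f_m ∈ E` and a bounded continuous `F : ℝ^m → ℝ` with `0 ≤ F ≤ 1`,
`F (T f₁, …, T f_m) = 1` and `F (S f₁, …, S f_m) = 0` for all `S ∈ C`. -/
theorem stmt_5 {E : Type*} [AddCommGroup E] [Module ℝ E] [TopologicalSpace E]
    [IsTopologicalAddGroup E] [ContinuousSMul ℝ E]
    (C : Set (WeakDual ℝ E)) (hC : IsClosed C) (T : WeakDual ℝ E) (hT : T ∉ C) :
    ∃ (m : ℕ) (f : Fin m → E) (F : (Fin m → ℝ) → ℝ),
      Continuous F ∧ (∀ v, F v ∈ Set.Icc (0 : ℝ) 1) ∧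
      F (fun i => T (f i)) = 1 ∧ ∀ S ∈ C, F (fun i => S (f i)) = 0 := by
  -- Cᶜ is a neighborhood of T
  have hmem : Cᶜ ∈ 𝓝 T := hC.isOpen_compl.mem_nhds hT
  -- the topology on WeakDual is induced by the evaluation map into E → ℝ
  rw [show 𝓝 T = Filter.comap (fun (S : WeakDual ℝ E) (y : E) => S y) (𝓝 (fun y => T y)) from
    nhds_induced (fun (S : WeakDual ℝ E) (y : E) => S y) T] at hmem
  obtain ⟨V, hV, hVsub⟩ := hmem
  rw [nhds_pi, Filter.mem_pi] at hV
  obtain ⟨I, hIfin, t, ht, htsub⟩ := hV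
  -- for each y ∈ I pick a ball inside t y
  have hball : ∀ y : E, ∃ ε > 0, Metric.ball (T y) ε ⊆ t y := fun y => by
    rcases Metric.mem_nhds_iff.mp (ht y) with ⟨ε, hε, hsub⟩
    exact ⟨ε, hε, hsub⟩
  choose ε hεpos hεsub using hball
  -- enumerate I
  lift I to Finset E using hIfin
  set m := I.card with hm
  have e : {x // x ∈ I} ≃ Fin m := I.equivFin
  set f : Fin m → E := fun i => e.symm i with hf
  -- minimal radius
  obtain ⟨δ, hδpos, hδle⟩ : ∃ δ > 0, ∀ i : Fin m, δ ≤ ε (f i) := by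
    rcases isEmpty_or_nonempty (Fin m) with h | h
    · exact ⟨1, one_pos, fun i => absurd trivial (h.elim i)⟩
    · obtain ⟨i0, hi0⟩ := Finite.exists_min (fun i => ε (f i))
      exact ⟨ε (f i0), hεpos _, hi0⟩
  set c : Fin m → ℝ := fun i => T (f i) with hc
  refine ⟨m, f, fun v => max 0 (1 - δ⁻¹ * dist v c), ?_, ?_, ?_, ?_⟩
  · exact continuous_const.max ((continuous_const.sub ((continuous_const.mul
      (continuous_id.dist continuous_const)))))
  · intro v
    constructor
    · exact le_max_left _ _
    · apply max_le (by norm_num)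
      have : 0 ≤ δ⁻¹ * dist v c := mul_nonneg (by positivity) dist_nonneg
      linarith
  · simp [hc, dist_self]
  · intro S hS
    have hdist : δ ≤ dist (fun i => S (f i)) c := by
      by_contra h
      push_neg at h
      have hin : (fun (y : E) => S y) ∈ Set.pi (I : Set E) t := by
        intro y hy
        apply hεsub y
        rw [Metric.mem_ball]
        have hle := dist_le_pi_dist (fun i => S (f i)) c (e ⟨y, hy⟩)
        have hfy : f (e ⟨y, hy⟩) = y := by simp [hf]
        calc dist (S y) (T y)
            = dist ((fun i => S (f i)) (e ⟨y, hy⟩)) (c (e ⟨y, hy⟩)) := by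
              simp [hc, hfy]
          _ ≤ dist (fun i => S (f i)) c := hle
          _ < δ := h
          _ ≤ ε (f (e ⟨y, hy⟩)) := hδle _
          _ = ε y := by rw [hfy]
      exact hVsub (htsub hin) hS
    have h1 : (1:ℝ) ≤ δ⁻¹ * dist (fun i => S (f i)) c := by
      rw [show (1:ℝ) = δ⁻¹ * δ by field_simp]
      exact mul_le_mul_of_nonneg_left hdist (by positivity)
    simp only [max_eq_left_iff]
    linarith
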